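/- Let E be a real Hilbert space, let Δt > 0, let N ≥ 1 be a natural number with T = NΔt, set t_n = nΔt, and let η : ℝ → E be twice continuously differentiable on [0, T]. Then ∑_{n=1}^{N} ‖(η(t_n) − η(t_{n-1}))/Δt − η'(t_n)‖² ≤ (Δt/3) ∫_0^T ‖η''(t)‖² dt. -/

import Mathlib

open MeasureTheory Set

/-- Cauchy–Schwarz for interval integrals of continuous functions. -/
private lemma cs_interval {a b : ℝ} (hab : a ≤ b) {f g : ℝ → ℝ}
    (hf : ContinuousOn f (Set.Icc a b)) (hg : ContinuousOn g (Set.Icc a b)) :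
    (∫ t in a..b, f t * g t) ^ 2 ≤ (∫ t in a..b, f t ^ 2) * ∫ t in a..b, g t ^ 2 := by
  have hu : Set.uIcc a b = Set.Icc a b := Set.uIcc_of_le hab
  have hif2 : IntervalIntegrable (fun t => f t ^ 2) volume a b := by
    apply ContinuousOn.intervalIntegrable; rw [hu]; exact hf.pow 2
  have hig2 : IntervalIntegrable (fun t => g t ^ 2) volume a b := by
    apply ContinuousOn.intervalIntegrable; rw [hu]; exact hg.pow 2
  have hifg : IntervalIntegrable (fun t => f t * g t) volume a b := by
    apply ContinuousOn.intervalIntegrable; rw [hu]; exact hf.mul hg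
  set A := ∫ t in a..b, f t ^ 2 with hA
  set B := ∫ t in a..b, f t * g t with hB
  set C := ∫ t in a..b, g t ^ 2 with hC
  have key : ∀ x : ℝ, 0 ≤ A * (x * x) + (2 * B) * x + C := by
    intro x
    have h0 : 0 ≤ ∫ t in a..b, (x * f t + g t) ^ 2 :=
      intervalIntegral.integral_nonneg hab (fun t _ => sq_nonneg _)
    have hexp : (∫ t in a..b, (x * f t + g t) ^ 2)
        = x ^ 2 * A + (2 * x * B + C) := by
      have h1 : ∀ t : ℝ, (x * f t + g t) ^ 2
          = x ^ 2 * f t ^ 2 + (2 * x * (f t * g t) + g t ^ 2) := fun t => by ring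
      simp_rw [h1]
      rw [intervalIntegral.integral_add (hif2.const_mul _)
        ((hifg.const_mul _).add hig2),
        intervalIntegral.integral_add (hifg.const_mul _) hig2,
        intervalIntegral.integral_const_mul, intervalIntegral.integral_const_mul]
    nlinarith [h0, hexp]
  have hd := discrim_le_zero key
  rw [discrim] at hd
  nlinarith [hd]

/-- Consistency estimate for the backward Euler discrete time derivative:
if `η` is twice continuously differentiable on `[0, T]` with `T = NΔt` and
`t_n = nΔt`, then
`∑_{n=1}^{N} ‖(η(t_n) − η(t_{n−1}))/Δt − η'(t_n)‖² ≤ (Δt/3) ∫_0^T ‖η''(t)‖² dt`. -/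
theorem backward_euler_consistency_estimate
    (E : Type*) [NormedAddCommGroup E] [InnerProductSpace ℝ E] [CompleteSpace E]
    (Δt : ℝ) (hΔt : 0 < Δt) (N : ℕ) (hN : 1 ≤ N) (T : ℝ) (hT : T = N * Δt)
    (η η' η'' : ℝ → E)
    (hη' : ∀ t ∈ Set.Icc (0 : ℝ) T, HasDerivWithinAt η (η' t) (Set.Icc (0 : ℝ) T) t)
    (hη'' : ∀ t ∈ Set.Icc (0 : ℝ) T, HasDerivWithinAt η' (η'' t) (Set.Icc (0 : ℝ) T) t)
    (hcont : ContinuousOn η'' (Set.Icc (0 : ℝ) T)) :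
    ∑ n ∈ Finset.Icc 1 N,
        ‖(Δt)⁻¹ • (η (n * Δt) - η (((n : ℝ) - 1) * Δt)) - η' (n * Δt)‖ ^ 2
      ≤ (Δt / 3) * ∫ t in (0 : ℝ)..T, ‖η'' t‖ ^ 2 := by
  have hηc : ContinuousOn η (Set.Icc 0 T) := fun t ht => (hη' t ht).continuousWithinAt
  have hη'c : ContinuousOn η' (Set.Icc 0 T) := fun t ht => (hη'' t ht).continuousWithinAt
  -- the per-term estimate
  have key : ∀ n ∈ Finset.Icc 1 N,
      ‖(Δt)⁻¹ • (η (n * Δt) - η (((n : ℝ) - 1) * Δt)) - η' (n * Δt)‖ ^ 2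
        ≤ (Δt / 3) * ∫ t in (((n : ℝ) - 1) * Δt)..((n : ℝ) * Δt), ‖η'' t‖ ^ 2 := by
    intro n hn
    obtain ⟨hn1, hnN⟩ := Finset.mem_Icc.mp hn
    set a := ((n : ℝ) - 1) * Δt with ha_def
    set b := (n : ℝ) * Δt with hb_def
    have h1n : (1 : ℝ) ≤ (n : ℝ) := by exact_mod_cast hn1
    have hnNr : (n : ℝ) ≤ (N : ℝ) := by exact_mod_cast hnN
    have ha0 : 0 ≤ a := mul_nonneg (by linarith) hΔt.le
    have hba : b - a = Δt := by rw [ha_def, hb_def]; ring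
    have hab : a ≤ b := by linarith
    have hbT : b ≤ T := by
      rw [hT, hb_def]
      exact mul_le_mul_of_nonneg_right hnNr hΔt.le
    have hsub : Set.Icc a b ⊆ Set.Icc 0 T := Set.Icc_subset_Icc ha0 hbT
    have hu : Set.uIcc a b = Set.Icc a b := Set.uIcc_of_le hab
    -- derivative of the auxiliary function G
    have hG : ∀ t ∈ Set.Ioo a b,
        HasDerivAt (fun s => (s - a) • η' s - η s) ((t - a) • η'' t) t := by
      intro t ht
      have ht0T : t ∈ Set.Ioo (0 : ℝ) T :=
        ⟨lt_of_le_of_lt ha0 ht.1, lt_of_lt_of_le ht.2 hbT⟩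
      have hmem : Set.Icc (0 : ℝ) T ∈ nhds t := Icc_mem_nhds ht0T.1 ht0T.2
      have htI : t ∈ Set.Icc (0 : ℝ) T := hsub (Set.Ioo_subset_Icc_self ht)
      have h1 : HasDerivAt η (η' t) t := (hη' t htI).hasDerivAt hmem
      have h2 : HasDerivAt η' (η'' t) t := (hη'' t htI).hasDerivAt hmem
      have h3 : HasDerivAt (fun s : ℝ => s - a) 1 t := (hasDerivAt_id t).sub_const a
      have h4 := (h3.smul h2).sub h1
      convert h4 using 1
      · rfl
      simp
    have hGc : ContinuousOn (fun s => (s - a) • η' s - η s) (Set.Icc a b) :=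
      ((continuousOn_id.sub continuousOn_const).smul (hη'c.mono hsub)).sub (hηc.mono hsub)
    have hintI : IntervalIntegrable (fun t => (t - a) • η'' t) volume a b := by
      apply ContinuousOn.intervalIntegrable; rw [hu]
      exact (continuousOn_id.sub continuousOn_const).smul (hcont.mono hsub)
    have hident := intervalIntegral.integral_eq_sub_of_hasDeriv_right_of_le hab hGc
      (fun t ht => (hG t ht).hasDerivWithinAt) hintI
    set I := ∫ t in a..b, (t - a) • η'' t with hI
    -- the remainder identity
    have hR : (Δt)⁻¹ • (η b - η a) - η' b = (-(Δt)⁻¹) • I := by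
      rw [hident, hba]
      have hne : Δt ≠ 0 := hΔt.ne'
      match_scalars <;> field_simp <;> ring
    -- norm of the integral via Cauchy–Schwarz
    have hInorm : ‖I‖ ≤ ∫ t in a..b, |t - a| * ‖η'' t‖ := by
      calc ‖I‖ ≤ ∫ t in a..b, ‖(t - a) • η'' t‖ :=
            intervalIntegral.norm_integral_le_integral_norm hab
        _ = ∫ t in a..b, |t - a| * ‖η'' t‖ := by
            congr 1; funext t; rw [norm_smul, Real.norm_eq_abs]
    have hcs := cs_interval hab (f := fun t => |t - a|) (g := fun t => ‖η'' t‖)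
      ((continuousOn_id.sub continuousOn_const).abs) ((hcont.mono hsub).norm)
    have habs : (∫ t in a..b, |t - a| ^ 2) = Δt ^ 3 / 3 := by
      have h1 : (∫ t in a..b, |t - a| ^ 2) = ∫ t in a..b, (t - a) ^ 2 := by
        congr 1; funext t; rw [sq_abs]
      rw [h1, intervalIntegral.integral_comp_sub_right (fun x => x ^ 2) a,
        sub_self, hba, integral_pow]
      norm_num
    have hM0 : ‖I‖ ^ 2 ≤ (∫ t in a..b, |t - a| * ‖η'' t‖) ^ 2 :=
      pow_le_pow_left₀ (norm_nonneg _) hInorm 2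
    have hcs2 : ‖I‖ ^ 2 ≤ (Δt ^ 3 / 3) * ∫ t in a..b, ‖η'' t‖ ^ 2 := by
      calc ‖I‖ ^ 2 ≤ (∫ t in a..b, |t - a| * ‖η'' t‖) ^ 2 := hM0
        _ ≤ (∫ t in a..b, |t - a| ^ 2) * ∫ t in a..b, ‖η'' t‖ ^ 2 := hcs
        _ = (Δt ^ 3 / 3) * ∫ t in a..b, ‖η'' t‖ ^ 2 := by rw [habs]
    -- conclude
    have hnorm : ‖(Δt)⁻¹ • (η b - η a) - η' b‖ ^ 2 = (Δt)⁻¹ ^ 2 * ‖I‖ ^ 2 := by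
      rw [hR, norm_smul, Real.norm_eq_abs, abs_neg, abs_inv, abs_of_pos hΔt, mul_pow]
    rw [hnorm]
    have h2 : (Δt)⁻¹ ^ 2 * ‖I‖ ^ 2
        ≤ (Δt)⁻¹ ^ 2 * ((Δt ^ 3 / 3) * ∫ t in a..b, ‖η'' t‖ ^ 2) :=
      mul_le_mul_of_nonneg_left hcs2 (by positivity)
    have h3 : (Δt)⁻¹ ^ 2 * ((Δt ^ 3 / 3) * ∫ t in a..b, ‖η'' t‖ ^ 2)
        = (Δt / 3) * ∫ t in a..b, ‖η'' t‖ ^ 2 := by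
      field_simp
    linarith [h2, h3.le, h3.ge]
  -- sum the estimates
  have hT0 : (0 : ℝ) ≤ T := by
    rw [hT]; positivity
  calc ∑ n ∈ Finset.Icc 1 N,
        ‖(Δt)⁻¹ • (η (n * Δt) - η (((n : ℝ) - 1) * Δt)) - η' (n * Δt)‖ ^ 2
      ≤ ∑ n ∈ Finset.Icc 1 N,
          (Δt / 3) * ∫ t in (((n : ℝ) - 1) * Δt)..((n : ℝ) * Δt), ‖η'' t‖ ^ 2 :=
        Finset.sum_le_sum key
    _ = (Δt / 3) * ∑ n ∈ Finset.Icc 1 N,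
          ∫ t in (((n : ℝ) - 1) * Δt)..((n : ℝ) * Δt), ‖η'' t‖ ^ 2 := by
        rw [Finset.mul_sum]
    _ = (Δt / 3) * ∑ k ∈ Finset.range N,
          ∫ t in ((k : ℝ) * Δt)..(((k : ℕ) + 1 : ℕ) * Δt : ℝ), ‖η'' t‖ ^ 2 := by
        congr 1
        rw [← Finset.Ico_add_one_right_eq_Icc, Finset.sum_Ico_eq_sum_range]
        apply Finset.sum_congr rfl
        intro k _
        congr 1 <;> push_cast <;> ring
    _ = (Δt / 3) * ∫ t in (((0 : ℕ) : ℝ) * Δt)..(((N : ℕ) : ℝ) * Δt), ‖η'' t‖ ^ 2 := by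
        congr 1
        apply intervalIntegral.sum_integral_adjacent_intervals (a := fun k : ℕ => (k : ℝ) * Δt)
        intro k hk
        apply ContinuousOn.intervalIntegrable
        apply (hcont.norm.pow 2).mono
        have h1 : (0 : ℝ) ≤ (k : ℝ) * Δt := by positivity
        have h2 : ((k : ℕ) + 1 : ℕ) * Δt ≤ T := by
          rw [hT]
          have : ((k + 1 : ℕ) : ℝ) ≤ (N : ℝ) := by exact_mod_cast hk
          exact mul_le_mul_of_nonneg_right this hΔt.le
        have h3 : ((k : ℝ)) * Δt ≤ ((k : ℕ) + 1 : ℕ) * Δt := by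
          have : ((k : ℕ) : ℝ) ≤ ((k + 1 : ℕ) : ℝ) := by exact_mod_cast Nat.le_succ k
          exact mul_le_mul_of_nonneg_right this hΔt.le
        rw [Set.uIcc_of_le h3]
        exact Set.Icc_subset_Icc h1 h2
    _ = (Δt / 3) * ∫ t in (0 : ℝ)..T, ‖η'' t‖ ^ 2 := by
        rw [hT]; norm_num
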